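/- Fix W, E, T₀, ρ > 0 and 0 < T_s < 1/(2W). Let K ≥ 1 and let h₁, …, h_{2K} be given by the coefficients of p_K(z) = z^K · T_K^{[2cos(2πWT_s), 2]}(z + z⁻¹) = 1 − Σ_{i=1}^{2K} h_i z^i. Then for every x ∈ C_{W,E,T₀,ρ} and every n ∈ ℤ, the prediction error e_n = x(nT_s) − Σ_{i=1}^{2K} h_i x((n−i)T_s) satisfies |e_n| ≤ √(2WE) · 2 · ((1 − cos(2πWT_s))/2)^K. -/

import Mathlib

open MeasureTheory Real

/-- The class `C_{W,E,T₀,ρ}` of finite-energy bandlimited signals with decaying tails. -/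
def signalClass (W E T₀ ρ : ℝ) : Set (ℝ → ℂ) :=
  {x | ∃ X : ℝ → ℂ, MemLp X 2 volume ∧
    (∀ t : ℝ, x t = ∫ f in (-W)..W, X f * Complex.exp (2 * Real.pi * Complex.I * f * t)) ∧
    (∫ t : ℝ, ‖x t‖ ^ 2) ≤ E ∧
    ∀ t : ℝ, T₀ ≤ |t| → ‖x t‖ ≤ |t| ^ (-ρ)}

/-- The shifted Chebyshev polynomial `T_K^{[a,b]}(y) = 2((b-a)/4)^K T_K(2(y-a)/(b-a) - 1)`,
evaluated at a complex point `y`. -/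
noncomputable def chebShiftC (K : ℕ) (a b : ℝ) (y : ℂ) : ℂ :=
  2 * (((b : ℂ) - (a : ℂ)) / 4) ^ K *
    (Polynomial.Chebyshev.T ℂ (K : ℤ)).eval (2 / ((b : ℂ) - (a : ℂ)) * (y - (a : ℂ)) - 1)

/-- The Laurent-polynomial expression `p_K(z) = z^K ⬝ T_K^{[a,2]}(z + z⁻¹)`. -/
noncomputable def pKfun (K : ℕ) (a : ℝ) (z : ℂ) : ℂ := z ^ K * chebShiftC K a 2 (z + z⁻¹)

noncomputable def eKer (f t : ℝ) : ℂ := Complex.exp (2 * Real.pi * Complex.I * f * t)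

lemma norm_eKer (f t : ℝ) : ‖eKer f t‖ = 1 := by
  rw [eKer, show (2 * (Real.pi:ℂ) * Complex.I * f * t) = ((2 * Real.pi * f * t : ℝ) : ℂ) * Complex.I
    by push_cast; ring]
  exact Complex.norm_exp_ofReal_mul_I _

lemma integrable_of_compact_support (W : ℝ) (g : ℝ → ℂ)
    (hg2 : MemLp g 2 volume) (hsupp : ∀ f : ℝ, f ∉ Set.Ioc (-W) W → g f = 0) :
    Integrable g volume := by
  have h1 : IntegrableOn g (Set.Ioc (-W) W) volume :=
    (hg2.restrict (Set.Ioc (-W) W)).integrable one_le_two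
  have h2 : Set.indicator (Set.Ioc (-W) W) g = g := by
    funext f
    by_cases hf : f ∈ Set.Ioc (-W) W
    · rw [Set.indicator_of_mem hf]
    · rw [Set.indicator_of_notMem hf, hsupp f hf]
  rw [← h2]
  exact h1.integrable_indicator measurableSet_Ioc

lemma integrable_mul_eKer (W : ℝ) (g : ℝ → ℂ) (hgm : StronglyMeasurable g)
    (hg2 : MemLp g 2 volume) (hsupp : ∀ f : ℝ, f ∉ Set.Ioc (-W) W → g f = 0) (t : ℝ) :
    Integrable (fun f : ℝ => g f * eKer f t) volume := by
  have hgi := integrable_of_compact_support W g hg2 hsupp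
  refine Integrable.mono' hgi.norm ?_ (Filter.Eventually.of_forall fun f => ?_)
  · exact hgm.aestronglyMeasurable.mul
      ((Complex.continuous_exp.comp (by continuity)).aestronglyMeasurable)
  · rw [norm_mul, norm_eKer, mul_one]

lemma sample_parseval (W L : ℝ) (hW : 0 < W) (hWL : 2 * W < L)
    (g : ℝ → ℂ) (hgm : StronglyMeasurable g) (hg2 : MemLp g 2 volume)
    (hsupp : ∀ f : ℝ, f ∉ Set.Ioc (-W) W → g f = 0) (s : ℝ) :
    Summable (fun n : ℤ => ‖∫ f : ℝ, g f * eKer f (s + n * (1/L))‖^2) ∧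
    ∑' n : ℤ, ‖∫ f : ℝ, g f * eKer f (s + n * (1/L))‖^2 = L * ∫ f : ℝ, ‖g f‖^2 := by
  have hL : 0 < L := lt_trans (by linarith) hWL
  have hLne : (L : ℂ) ≠ 0 := by exact_mod_cast hL.ne'
  haveI : Fact (0 < L) := ⟨hL⟩
  set J : ℝ → ℂ := fun t => ∫ f : ℝ, g f * eKer f t with hJ
  set a₀ : ℝ := -(L/2) with ha₀
  have hab : a₀ < a₀ + L := by simp only [ha₀]; linarith
  have hIocsub : Set.Ioc (-W) W ⊆ Set.Ioc a₀ (a₀ + L) := by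
    intro y hy
    simp only [Set.mem_Ioc] at hy ⊢
    exact ⟨by simp only [ha₀]; linarith [hy.1], by simp only [ha₀]; linarith [hy.2]⟩
  set gs : ℝ → ℂ := fun f => g f * Complex.exp (2 * Real.pi * Complex.I * f * s) with hgs
  have hgs_m : StronglyMeasurable gs :=
    hgm.mul (Complex.continuous_exp.comp (by continuity)).stronglyMeasurable
  have hgs_norm : ∀ f : ℝ, ‖gs f‖ = ‖g f‖ := fun f => by
    simp only [hgs]
    rw [norm_mul, show Complex.exp (2 * Real.pi * Complex.I * f * s) = eKer f s by rw [eKer],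
      norm_eKer, mul_one]
  have hgs_supp : ∀ f : ℝ, f ∉ Set.Ioc (-W) W → gs f = 0 := fun f hf => by
    simp only [hgs]; rw [hsupp f hf, zero_mul]
  have hgs2 : MemLp gs 2 volume :=
    hg2.of_le hgs_m.aestronglyMeasurable
      (Filter.Eventually.of_forall fun f => le_of_eq (hgs_norm f))
  set F : AddCircle L → ℂ := AddCircle.liftIoc L a₀ gs with hF
  have hFm : StronglyMeasurable F := by
    exact (hgs_m.comp_measurable measurable_subtype_coe).comp_measurable
      (AddCircle.measurableEquivIoc L a₀).measurable
  have hcomp : ∀ x ∈ Set.Ioc a₀ (a₀ + L), F ↑x = gs x := fun x hx =>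
    AddCircle.liftIoc_coe_apply hx
  have hcomp_ae : (fun x : ℝ => F ↑x) =ᵐ[volume.restrict (Set.Ioc a₀ (a₀ + L))] gs :=
    (ae_restrict_iff' measurableSet_Ioc).2 (Filter.Eventually.of_forall hcomp)
  have hF2vol : MemLp F 2 volume := by
    refine ⟨hFm.aestronglyMeasurable, ?_⟩
    have h1 : eLpNorm (F ∘ (fun x : ℝ => (x : AddCircle L))) 2
        (volume.restrict (Set.Ioc a₀ (a₀ + L))) = eLpNorm F 2 volume :=
      eLpNorm_comp_measurePreserving hFm.aestronglyMeasurable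
        (AddCircle.measurePreserving_mk L a₀)
    rw [← h1]
    have hcomp_ae' : (F ∘ (fun x : ℝ => (x : AddCircle L)))
        =ᵐ[volume.restrict (Set.Ioc a₀ (a₀ + L))] gs := hcomp_ae
    rw [eLpNorm_congr_ae hcomp_ae']
    calc eLpNorm gs 2 (volume.restrict (Set.Ioc a₀ (a₀ + L)))
        ≤ eLpNorm gs 2 volume := eLpNorm_mono_measure _ Measure.restrict_le_self
      _ < ⊤ := hgs2.2
  have hhaar : (AddCircle.haarAddCircle : Measure (AddCircle L))
      = (ENNReal.ofReal L)⁻¹ • (volume : Measure (AddCircle L)) := by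
    rw [AddCircle.volume_eq_smul_haarAddCircle, smul_smul, ENNReal.inv_mul_cancel, one_smul]
    · exact (ENNReal.ofReal_pos.2 hL).ne'
    · exact ENNReal.ofReal_ne_top
  have hF2haar : MemLp F 2 (AddCircle.haarAddCircle) := by
    rw [hhaar]
    exact hF2vol.smul_measure (ENNReal.inv_ne_top.2 (ENNReal.ofReal_pos.2 hL).ne')
  set FL := hF2haar.toLp F with hFL
  have hae : (FL : AddCircle L → ℂ) =ᵐ[AddCircle.haarAddCircle] F := hF2haar.coeFn_toLp
  -- Fourier coefficients
  have hcoeff : ∀ n : ℤ, fourierCoeff F n = (1/L : ℝ) • (J (s - n * (1/L))) := by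
    intro n
    rw [hF, fourierCoeff_liftIoc_eq, fourierCoeffOn_eq_integral]
    have hba : a₀ + L - a₀ = L := by ring
    rw [hba]
    congr 1
    rw [intervalIntegral.integral_of_le hab.le]
    have hptwise : ∀ x : ℝ, fourier (-n) (x : AddCircle L) • gs x
        = g x * eKer x (s - n * (1/L)) := by
      intro x
      rw [fourier_coe_apply, smul_eq_mul]
      show Complex.exp (2 * (Real.pi:ℂ) * Complex.I * ((-n : ℤ) : ℂ) * (x:ℂ) / (L:ℂ))
          * (g x * Complex.exp (2 * (Real.pi:ℂ) * Complex.I * (x:ℂ) * (s:ℂ)))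
        = g x * eKer x (s - n * (1/L))
      rw [eKer]
      rw [mul_comm (Complex.exp (2 * (Real.pi:ℂ) * Complex.I * ((-n : ℤ) : ℂ) * (x:ℂ) / (L:ℂ)))
        (g x * Complex.exp (2 * (Real.pi:ℂ) * Complex.I * (x:ℂ) * (s:ℂ))), mul_assoc,
        ← Complex.exp_add]
      congr 1
      push_cast
      field_simp
      ring
    rw [MeasureTheory.setIntegral_congr_fun measurableSet_Ioc (fun x _ => hptwise x)]
    simp only [hJ]
    exact MeasureTheory.setIntegral_eq_integral_of_forall_compl_eq_zero
      (fun x hx => by rw [hsupp x (fun hmem => hx (hIocsub hmem)), zero_mul])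
  -- Parseval
  have hpars := tsum_sq_fourierCoeff FL
  have hclhs : ∀ n : ℤ, fourierCoeff (FL : AddCircle L → ℂ) n = fourierCoeff F n := by
    intro n
    unfold fourierCoeff
    exact integral_congr_ae (hae.mono fun x hx => by simp only [hx])
  have hrhs1 : ∫ t : AddCircle L, ‖(FL : AddCircle L → ℂ) t‖^2 ∂AddCircle.haarAddCircle
      = ∫ t : AddCircle L, ‖F t‖^2 ∂AddCircle.haarAddCircle :=
    integral_congr_ae (hae.mono fun x hx => by simp only [hx])
  have hrhs2 : ∫ t : AddCircle L, ‖F t‖^2 ∂AddCircle.haarAddCircle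
      = (1/L) * ∫ f : ℝ, ‖g f‖^2 := by
    have h1 : ∫ x in a₀..a₀ + L, ‖F (x : AddCircle L)‖^2
        = ∫ t : AddCircle L, ‖F t‖^2 ∂(volume : Measure (AddCircle L)) :=
      AddCircle.intervalIntegral_preimage L a₀ (fun z => ‖F z‖^2)
    have h2 : ∫ t : AddCircle L, ‖F t‖^2 ∂(volume : Measure (AddCircle L))
        = L * ∫ t : AddCircle L, ‖F t‖^2 ∂AddCircle.haarAddCircle := by
      rw [AddCircle.volume_eq_smul_haarAddCircle, integral_smul_measure,
        ENNReal.toReal_ofReal hL.le, smul_eq_mul]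
    have h3 : ∫ x in a₀..a₀ + L, ‖F (x : AddCircle L)‖^2 = ∫ f : ℝ, ‖g f‖^2 := by
      rw [intervalIntegral.integral_of_le hab.le]
      rw [MeasureTheory.setIntegral_congr_fun measurableSet_Ioc
        (fun x hx => by rw [hcomp x hx, hgs_norm x])]
      exact MeasureTheory.setIntegral_eq_integral_of_forall_compl_eq_zero
        (fun x hx => by rw [hsupp x (fun hmem => hx (hIocsub hmem))]; simp)
    rw [← h1, h3] at h2
    rw [h2]
    field_simp
  -- summability
  have hsum0 : Summable (fun n : ℤ => ‖fourierCoeff (FL : AddCircle L → ℂ) n‖^2) := by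
    have hmem := lp.memℓp (fourierBasis.repr FL)
    rw [memℓp_gen_iff (by norm_num : (0:ℝ) < (2 : ENNReal).toReal)] at hmem
    exact hmem.congr fun i => by
      rw [fourierBasis_repr, show ((2 : ENNReal)).toReal = ((2:ℕ):ℝ) by norm_num,
        Real.rpow_natCast]
  have hterm : ∀ n : ℤ, ‖fourierCoeff (FL : AddCircle L → ℂ) n‖^2
      = (1/L)^2 * ‖J (s - n * (1/L))‖^2 := by
    intro n
    rw [hclhs n, hcoeff n, norm_smul, Real.norm_eq_abs, abs_of_pos (by positivity), mul_pow]
  have hsum1 : Summable (fun n : ℤ => ‖J (s - n * (1/L))‖^2) := by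
    rw [funext hterm] at hsum0
    exact (summable_mul_left_iff (by positivity : ((1:ℝ)/L)^2 ≠ 0)).1 hsum0
  have hsum2 : Summable (fun n : ℤ => ‖J (s + n * (1/L))‖^2) := by
    have h := hsum1.comp_injective (neg_injective : Function.Injective (fun n : ℤ => -n))
    exact h.congr fun n => by
      show ‖J (s - ((-n : ℤ) : ℝ) * (1/L))‖^2 = ‖J (s + n * (1/L))‖^2
      rw [show s - ((-n : ℤ) : ℝ) * (1/L) = s + n * (1/L) by push_cast; ring]
  refine ⟨hsum2, ?_⟩
  have hA : (1/L)^2 * ∑' n : ℤ, ‖J (s - n * (1/L))‖^2 = (1/L) * ∫ f : ℝ, ‖g f‖^2 := by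
    calc (1/L)^2 * ∑' n : ℤ, ‖J (s - n * (1/L))‖^2
        = ∑' n : ℤ, ‖fourierCoeff (FL : AddCircle L → ℂ) n‖^2 := by
          rw [← tsum_mul_left]; exact tsum_congr fun n => (hterm n).symm
      _ = ∫ t : AddCircle L, ‖(FL : AddCircle L → ℂ) t‖^2 ∂AddCircle.haarAddCircle := hpars
      _ = (1/L) * ∫ f : ℝ, ‖g f‖^2 := by rw [hrhs1, hrhs2]
  have hB : ∑' n : ℤ, ‖J (s - n * (1/L))‖^2 = L * ∫ f : ℝ, ‖g f‖^2 := by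
    have h := congrArg (fun r : ℝ => L^2 * r) hA
    calc ∑' n : ℤ, ‖J (s - n * (1/L))‖^2
        = L^2 * ((1/L)^2 * ∑' n : ℤ, ‖J (s - n * (1/L))‖^2) := by
          field_simp
      _ = L^2 * ((1/L) * ∫ f : ℝ, ‖g f‖^2) := by rw [hA]
      _ = L * ∫ f : ℝ, ‖g f‖^2 := by field_simp
  have htsum_eq : ∑' n : ℤ, ‖J (s + n * (1/L))‖^2 = ∑' n : ℤ, ‖J (s - n * (1/L))‖^2 := by
    have h := (Equiv.neg ℤ).tsum_eq (fun n : ℤ => ‖J (s + n * (1/L))‖^2)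
    rw [← h]
    exact tsum_congr fun n => by
      show ‖J (s + ((Equiv.neg ℤ n : ℤ) : ℝ) * (1/L))‖^2 = ‖J (s - n * (1/L))‖^2
      rw [show ((Equiv.neg ℤ n : ℤ) : ℝ) = -(n : ℝ) by simp, show s + -(n:ℝ) * (1/L) = s - n * (1/L) by ring]
  rw [htsum_eq, hB]

lemma plancherel_compact (W L : ℝ) (hW : 0 < W) (hWL : 2 * W < L)
    (g : ℝ → ℂ) (hgm : StronglyMeasurable g) (hg2 : MemLp g 2 volume)
    (hsupp : ∀ f : ℝ, f ∉ Set.Ioc (-W) W → g f = 0) :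
    Integrable (fun t : ℝ => ‖∫ f : ℝ, g f * eKer f t‖^2) volume ∧
    ∫ t : ℝ, ‖∫ f : ℝ, g f * eKer f t‖^2 = ∫ f : ℝ, ‖g f‖^2 := by
  have hL : 0 < L := lt_trans (by linarith) hWL
  have hp : 0 < 1/L := by positivity
  set J : ℝ → ℂ := fun t => ∫ f : ℝ, g f * eKer f t with hJdef
  set Ig : ℝ := ∫ f : ℝ, ‖g f‖^2 with hIg
  have hIg0 : 0 ≤ Ig := integral_nonneg (fun f => sq_nonneg _)
  have hJm : StronglyMeasurable J := by
    apply MeasureTheory.StronglyMeasurable.integral_prod_right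
      (f := fun (t : ℝ) (f : ℝ) => g f * eKer f t)
    apply StronglyMeasurable.mul
    · exact hgm.comp_measurable measurable_snd
    · apply Continuous.stronglyMeasurable
      simp only [eKer]
      exact Complex.continuous_exp.comp
        (((continuous_const.mul (Complex.continuous_ofReal.comp continuous_snd)).mul
          (Complex.continuous_ofReal.comp continuous_fst)))
  set φ : ℝ → ENNReal := fun t => ENNReal.ofReal (‖J t‖^2) with hφ
  have hφm : Measurable φ := (hJm.measurable.norm.pow_const 2).ennreal_ofReal
  have hptw : ∀ s : ℝ, ∑' n : ℤ, φ (s + n * (1/L)) = ENNReal.ofReal (L * Ig) := by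
    intro s
    obtain ⟨hs, he⟩ := sample_parseval W L hW hWL g hgm hg2 hsupp s
    calc ∑' n : ℤ, φ (s + n * (1/L))
        = ENNReal.ofReal (∑' n : ℤ, ‖J (s + n * (1/L))‖^2) :=
          (ENNReal.ofReal_tsum_of_nonneg (fun n => sq_nonneg _) hs).symm
      _ = ENNReal.ofReal (L * Ig) := by rw [he]
  have hcover : (⋃ n : ℤ, Set.Ioc ((0:ℝ) + n • (1/L)) (0 + (n + 1) • (1/L))) = Set.univ :=
    iUnion_Ioc_add_zsmul hp 0
  have hdisj : Pairwise (Function.onFun Disjoint fun n : ℤ =>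
      Set.Ioc ((0:ℝ) + n • (1/L)) (0 + (n + 1) • (1/L))) :=
    Set.pairwise_disjoint_Ioc_add_zsmul (0:ℝ) (1/L)
  have h1 : ∫⁻ t, φ t = ∑' n : ℤ, ∫⁻ t in Set.Ioc ((0:ℝ) + n • (1/L)) (0 + (n+1) • (1/L)), φ t := by
    rw [← setLIntegral_univ φ, ← hcover, lintegral_iUnion (fun n => measurableSet_Ioc) hdisj φ]
  have h2 : ∀ n : ℤ, ∫⁻ t in Set.Ioc ((0:ℝ) + n • (1/L)) (0 + (n+1) • (1/L)), φ t
      = ∫⁻ u in Set.Ioc (0:ℝ) (1/L), φ (u + n • (1/L)) := by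
    intro n
    have hmp := measurePreserving_add_right (volume : Measure ℝ) (n • (1/L) : ℝ)
    have hemb : MeasurableEmbedding (fun x : ℝ => x + (n • (1/L) : ℝ)) :=
      measurableEmbedding_addRight _
    have h := hmp.setLIntegral_comp_preimage_emb hemb φ
      (Set.Ioc ((0:ℝ) + n • (1/L)) (0 + (n+1) • (1/L)))
    have hset : (fun x : ℝ => x + (n • (1/L) : ℝ)) ⁻¹'
        Set.Ioc ((0:ℝ) + n • (1/L)) (0 + (n+1) • (1/L)) = Set.Ioc (0:ℝ) (1/L) := by
      ext x
      simp only [Set.mem_preimage, Set.mem_Ioc, zero_add, add_zsmul, one_zsmul]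
      constructor
      · rintro ⟨ha, hb⟩; exact ⟨by linarith, by linarith⟩
      · rintro ⟨ha, hb⟩; exact ⟨by linarith, by linarith⟩
    rw [hset] at h
    exact h.symm
  have h3 : ∫⁻ t, φ t = ∫⁻ u in Set.Ioc (0:ℝ) (1/L), ∑' n : ℤ, φ (u + n • (1/L)) := by
    rw [h1]
    simp only [h2]
    rw [← lintegral_tsum (f := fun (n : ℤ) (u : ℝ) => φ (u + n • (1/L)))
      (fun n => ((hφm.comp (measurable_add_const _)).aemeasurable))]
  have h4 : ∫⁻ t, φ t = ENNReal.ofReal Ig := by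
    rw [h3]
    have hptw' : ∀ u : ℝ, ∑' n : ℤ, φ (u + n • (1/L)) = ENNReal.ofReal (L * Ig) := by
      intro u
      simp only [zsmul_eq_mul]
      exact hptw u
    simp only [hptw']
    rw [setLIntegral_const, Real.volume_Ioc, sub_zero,
      ← ENNReal.ofReal_mul (mul_nonneg hL.le hIg0)]
    congr 1
    field_simp
  have hmeas2 : AEStronglyMeasurable (fun t => ‖J t‖^2) volume :=
    (hJm.measurable.norm.pow_const 2).aestronglyMeasurable
  have hint : Integrable (fun t => ‖J t‖^2) volume := by
    refine ⟨hmeas2, ?_⟩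
    rw [hasFiniteIntegral_iff_ofReal (Filter.Eventually.of_forall fun t => sq_nonneg _)]
    have : ∫⁻ a : ℝ, ENNReal.ofReal (‖J a‖^2) = ∫⁻ t, φ t := rfl
    rw [this, h4]
    exact ENNReal.ofReal_lt_top
  refine ⟨hint, ?_⟩
  rw [integral_eq_lintegral_of_nonneg_ae (Filter.Eventually.of_forall fun t => sq_nonneg _) hmeas2]
  have : ∫⁻ a : ℝ, ENNReal.ofReal (‖J a‖^2) = ∫⁻ t, φ t := rfl
  rw [this, h4, ENNReal.toReal_ofReal hIg0]

lemma cheb_norm_bound (W Ts f : ℝ) (hW : 0 < W) (hTs : 0 < Ts) (hNyq : Ts < 1 / (2 * W))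
    (K : ℕ) (hf : f ∈ Set.Ioc (-W) W) :
    ‖pKfun K (2 * Real.cos (2 * Real.pi * W * Ts))
        (Complex.exp ((-(2 * Real.pi * f * Ts) : ℝ) * Complex.I))‖
      ≤ 2 * ((1 - Real.cos (2 * Real.pi * W * Ts)) / 2) ^ K := by
  set α : ℝ := 2 * Real.pi * W * Ts with hα
  set θ : ℝ := 2 * Real.pi * f * Ts with hθ
  have hπ := Real.pi_pos
  have hα0 : 0 < α := by positivity
  have hαπ : α < Real.pi := by
    rw [hα]
    have h2W : 0 < 2 * W := by linarith
    calc 2 * Real.pi * W * Ts < 2 * Real.pi * W * (1 / (2 * W)) := by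
          apply mul_lt_mul_of_pos_left hNyq; positivity
      _ = Real.pi := by field_simp
  have hθα : |θ| ≤ α := by
    rw [hθ, hα, abs_mul, abs_mul, abs_mul]
    have : |f| ≤ W := by
      rw [abs_le]; exact ⟨hf.1.le, hf.2⟩
    have h2 : |(2:ℝ)| = 2 := by norm_num
    have hp : |Real.pi| = Real.pi := abs_of_pos hπ
    have ht : |Ts| = Ts := abs_of_pos hTs
    rw [h2, hp, ht]
    have : |(2:ℝ)| * |Real.pi| * |f| ≤ 2 * Real.pi * W := by
      rw [h2, hp]; nlinarith
    nlinarith [abs_nonneg f]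
  set a : ℝ := 2 * Real.cos α with ha
  have hcosα1 : Real.cos α < 1 := by
    have := Real.cos_lt_cos_of_nonneg_of_le_pi (le_refl 0) hαπ.le hα0
    simpa using this
  have h2a : 0 < 2 - a := by rw [ha]; linarith
  have hcosθ : Real.cos α ≤ Real.cos θ := by
    rw [← Real.cos_abs θ]
    exact Real.cos_le_cos_of_nonneg_of_le_pi (abs_nonneg θ) hαπ.le hθα
  have hcosθ1 : Real.cos θ ≤ 1 := Real.cos_le_one θ
  set u : ℝ := 2 / (2 - a) * (2 * Real.cos θ - a) - 1 with hu
  have hu1 : -1 ≤ u := by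
    rw [hu, ha, div_mul_eq_mul_div, le_sub_iff_add_le]
    rw [le_div_iff₀ h2a]
    nlinarith
  have hu2 : u ≤ 1 := by
    rw [hu, ha, div_mul_eq_mul_div, sub_le_iff_le_add]
    rw [div_le_iff₀ h2a]
    nlinarith
  set z : ℂ := Complex.exp ((-θ : ℝ) * Complex.I) with hz
  have hznorm : ‖z‖ = 1 := by
    rw [hz]; exact Complex.norm_exp_ofReal_mul_I _
  have hzinv : z⁻¹ = Complex.exp ((θ : ℝ) * Complex.I) := by
    rw [hz, ← Complex.exp_neg]
    congr 1
    push_cast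
    ring
  have hzsum : z + z⁻¹ = ((2 * Real.cos θ : ℝ) : ℂ) := by
    rw [hz, hzinv, Complex.exp_mul_I, Complex.exp_mul_I]
    push_cast
    rw [Complex.cos_neg, Complex.sin_neg, ← Complex.ofReal_cos]
    push_cast
    ring
  have harg : 2 / ((((2:ℝ)) : ℂ) - (a : ℂ)) * ((z + z⁻¹) - (a : ℂ)) - 1 = (u : ℂ) := by
    rw [hzsum, hu]
    push_cast
    ring
  set ψ : ℝ := Real.arccos u with hψ
  have hcosψ : Real.cos ψ = u := Real.cos_arccos hu1 hu2
  have heval : (Polynomial.Chebyshev.T ℂ (K : ℤ)).eval ((u : ℝ) : ℂ)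
      = Complex.cos ((K : ℂ) * (ψ : ℂ)) := by
    rw [← hcosψ, Complex.ofReal_cos]
    exact_mod_cast Polynomial.Chebyshev.T_complex_cos (ψ : ℂ) (K : ℤ)
  have hTnorm : ‖(Polynomial.Chebyshev.T ℂ (K : ℤ)).eval ((u : ℝ) : ℂ)‖ ≤ 1 := by
    rw [heval]
    have : ((K : ℂ) * (ψ : ℂ)) = ((K * ψ : ℝ) : ℂ) := by push_cast; ring
    rw [this, ← Complex.ofReal_cos, Complex.norm_real, Real.norm_eq_abs]
    exact Real.abs_cos_le_one _
  have key : pKfun K a z = z ^ K * (2 * ((((2:ℝ):ℂ) - (a:ℂ)) / 4) ^ K *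
      (Polynomial.Chebyshev.T ℂ (K : ℤ)).eval ((u : ℝ) : ℂ)) := by
    rw [pKfun, chebShiftC, harg]
  have : ‖pKfun K a z‖ = ‖z‖ ^ K * (2 * ‖((((2:ℝ):ℂ) - (a:ℂ)) / 4)‖ ^ K *
      ‖(Polynomial.Chebyshev.T ℂ (K : ℤ)).eval ((u : ℝ) : ℂ)‖) := by
    rw [key]
    simp [norm_mul, norm_pow]
  rw [this, hznorm, one_pow, one_mul]
  have hnq : ‖((((2:ℝ):ℂ) - (a:ℂ)) / 4)‖ = (2 - a) / 4 := by
    rw [show (((2:ℝ):ℂ) - (a:ℂ)) / 4 = (((2 - a)/4 : ℝ) : ℂ) by push_cast; ring]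
    rw [Complex.norm_real, Real.norm_eq_abs, abs_of_nonneg (by linarith)]
  rw [hnq]
  have hq : (2 - a) / 4 = (1 - Real.cos α) / 2 := by rw [ha]; ring
  rw [hq]
  have hqnn : (0:ℝ) ≤ ((1 - Real.cos α) / 2) ^ K :=
    pow_nonneg (by linarith [Real.cos_le_one α]) K
  nlinarith [hTnorm, hqnn]


/-- With the Chebyshev choice of prediction coefficients, the prediction error is bounded by
`√(2WE) ⬝ 2 ((1 - cos(2πWTs))/2)^K` at all times, for every signal in the class. -/
theorem prediction_error_chebyshev_bound
    (W E T₀ ρ Ts : ℝ) (hW : 0 < W) (hE : 0 < E) (hT₀ : 0 < T₀) (hρ : 0 < ρ)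
    (hTs : 0 < Ts) (hNyq : Ts < 1 / (2 * W))
    (K : ℕ) (hK : 1 ≤ K)
    (h : ℕ → ℝ)
    (hcoef : ∀ z : ℂ, z ≠ 0 →
      pKfun K (2 * Real.cos (2 * Real.pi * W * Ts)) z
        = 1 - ∑ i ∈ Finset.Icc 1 (2 * K), (h i : ℂ) * z ^ i)
    (x : ℝ → ℂ) (hx : x ∈ signalClass W E T₀ ρ) :
    ∀ n : ℤ,
      ‖x ((n : ℝ) * Ts)
          - ∑ i ∈ Finset.Icc 1 (2 * K), (h i : ℂ) * x (((n : ℝ) - (i : ℝ)) * Ts)‖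
        ≤ Real.sqrt (2 * W * E) * 2 * ((1 - Real.cos (2 * Real.pi * W * Ts)) / 2) ^ K := by
  intro n
  obtain ⟨X₀, hX₀, hx_eq, hEx, _⟩ := hx
  have hXm_sm : StronglyMeasurable (hX₀.1.mk X₀) := hX₀.1.stronglyMeasurable_mk
  have hXae : X₀ =ᵐ[volume] hX₀.1.mk X₀ := hX₀.1.ae_eq_mk
  have hXm2 : MemLp (hX₀.1.mk X₀) 2 volume := hX₀.ae_eq hXae
  set g : ℝ → ℂ := Set.indicator (Set.Ioc (-W) W) (hX₀.1.mk X₀) with hg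
  have hgm : StronglyMeasurable g := hXm_sm.indicator measurableSet_Ioc
  have hg2 : MemLp g 2 volume := hXm2.indicator measurableSet_Ioc
  have hsupp : ∀ f : ℝ, f ∉ Set.Ioc (-W) W → g f = 0 := fun f hf =>
    Set.indicator_of_notMem hf _
  have hgi : Integrable g volume := integrable_of_compact_support W g hg2 hsupp
  have hIt : ∀ t : ℝ, Integrable (fun f : ℝ => g f * eKer f t) volume :=
    integrable_mul_eKer W g hgm hg2 hsupp
  -- x equals the integral of g against the kernel
  have hxJ : ∀ t : ℝ, x t = ∫ f : ℝ, g f * eKer f t := by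
    intro t
    rw [hx_eq t, intervalIntegral.integral_of_le (by linarith : -W ≤ W)]
    have h1 : ∫ f in Set.Ioc (-W) W, X₀ f * Complex.exp (2 * Real.pi * Complex.I * f * t)
        = ∫ f in Set.Ioc (-W) W, (hX₀.1.mk X₀) f * eKer f t :=
      integral_congr_ae ((ae_restrict_of_ae hXae).mono fun f hf => by dsimp only; rw [hf, eKer])
    rw [h1, ← integral_indicator measurableSet_Ioc]
    congr 1
    funext f
    by_cases hf : f ∈ Set.Ioc (-W) W
    · rw [Set.indicator_of_mem hf, hg, Set.indicator_of_mem hf]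
    · rw [Set.indicator_of_notMem hf, hsupp f hf, zero_mul]
  -- Plancherel and the energy bound
  have hWL : 2 * W < 1 / Ts := by
    rw [lt_div_iff₀ hTs]
    rw [lt_div_iff₀ (by linarith : (0:ℝ) < 2 * W)] at hNyq
    linarith
  obtain ⟨hint, hPlanch⟩ := plancherel_compact W (1/Ts) hW hWL g hgm hg2 hsupp
  have hIgE : ∫ f : ℝ, ‖g f‖^2 ≤ E := by
    rw [← hPlanch]
    have : (∫ t : ℝ, ‖x t‖ ^ 2) = ∫ t : ℝ, ‖∫ f : ℝ, g f * eKer f t‖^2 := by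
      apply integral_congr_ae
      exact Filter.Eventually.of_forall fun t => by dsimp only; rw [hxJ t]
    linarith [hEx, this.symm.le, this.le]
  have hIg0 : 0 ≤ ∫ f : ℝ, ‖g f‖^2 := integral_nonneg fun f => sq_nonneg _
  -- L¹ bound on g via Cauchy-Schwarz
  have hI₁ : ∫ f : ℝ, ‖g f‖ ≤ Real.sqrt (2 * W * E) := by
    haveI : Fact ((volume : Measure ℝ) (Set.Ioc (-W) W) < ⊤) :=
      ⟨by rw [Real.volume_Ioc]; exact ENNReal.ofReal_lt_top⟩
    have hconj : Real.HolderConjugate 2 2 := Real.HolderConjugate.two_two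
    have hf2 : MemLp (fun f : ℝ => ‖g f‖) (ENNReal.ofReal 2)
        (volume.restrict (Set.Ioc (-W) W)) := by
      rw [show ENNReal.ofReal (2:ℝ) = 2 by norm_num]
      exact (hg2.restrict _).norm
    have hone : MemLp (fun _ : ℝ => (1:ℝ)) (ENNReal.ofReal 2)
        (volume.restrict (Set.Ioc (-W) W)) := memLp_const 1
    have hHold := integral_mul_le_Lp_mul_Lq_of_nonneg hconj
      (Filter.Eventually.of_forall fun f => norm_nonneg (g f))
      (Filter.Eventually.of_forall fun _ => zero_le_one) hf2 hone
    have e1 : ∫ f in Set.Ioc (-W) W, ‖g f‖ * 1 = ∫ f : ℝ, ‖g f‖ := by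
      simp only [mul_one]
      exact MeasureTheory.setIntegral_eq_integral_of_forall_compl_eq_zero
        (fun f hf => by rw [hsupp f hf, norm_zero])
    have e2 : ∫ f in Set.Ioc (-W) W, ‖g f‖ ^ (2:ℝ) = ∫ f : ℝ, ‖g f‖^2 := by
      have hconv : ∀ f : ℝ, ‖g f‖ ^ (2:ℝ) = ‖g f‖^2 := fun f => by
        rw [show (2:ℝ) = ((2:ℕ):ℝ) by norm_num, Real.rpow_natCast]
      simp only [hconv]
      exact MeasureTheory.setIntegral_eq_integral_of_forall_compl_eq_zero
        (fun f hf => by rw [hsupp f hf]; simp)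
    have e3 : ∫ _ in Set.Ioc (-W) W, ((1:ℝ)) ^ (2:ℝ) = 2 * W := by
      simp only [Real.one_rpow]
      rw [setIntegral_const, Real.volume_real_Ioc_of_le (by linarith : -W ≤ W), smul_eq_mul,
        mul_one]
      ring
    rw [e1, e2, e3] at hHold
    calc ∫ f : ℝ, ‖g f‖ ≤ (∫ f : ℝ, ‖g f‖^2) ^ ((1:ℝ)/2) * (2*W) ^ ((1:ℝ)/2) := hHold
      _ ≤ E ^ ((1:ℝ)/2) * (2*W) ^ ((1:ℝ)/2) := by
          apply mul_le_mul_of_nonneg_right (Real.rpow_le_rpow hIg0 hIgE (by norm_num))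
          exact Real.rpow_nonneg (by linarith) _
      _ = Real.sqrt (2*W*E) := by
          rw [← Real.sqrt_eq_rpow, ← Real.sqrt_eq_rpow, mul_comm,
            ← Real.sqrt_mul (by linarith : (0:ℝ) ≤ 2*W) E]
  -- the prediction-error expansion
  set B : ℝ := 2 * ((1 - Real.cos (2 * Real.pi * W * Ts)) / 2) ^ K with hB
  have hB0 : 0 ≤ B := by
    rw [hB]
    exact mul_nonneg (by norm_num)
      (pow_nonneg (by linarith [Real.cos_le_one (2 * Real.pi * W * Ts)]) K)
  set z : ℝ → ℂ := fun f => Complex.exp ((-(2 * Real.pi * f * Ts) : ℝ) * Complex.I) with hzdef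
  have hzne : ∀ f : ℝ, z f ≠ 0 := fun f => Complex.exp_ne_zero _
  have hker : ∀ (f : ℝ) (i : ℕ), eKer f (((n:ℝ) - i) * Ts) = eKer f ((n:ℝ)*Ts) * (z f)^i := by
    intro f i
    simp only [hzdef]
    rw [← Complex.exp_nat_mul, eKer, eKer, ← Complex.exp_add]
    congr 1
    push_cast
    ring
  have hDid : ∀ f : ℝ, g f * eKer f ((n:ℝ)*Ts)
        - ∑ i ∈ Finset.Icc 1 (2*K), (h i : ℂ) * (g f * eKer f (((n:ℝ) - i)*Ts))
      = g f * eKer f ((n:ℝ)*Ts)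
        * (1 - ∑ i ∈ Finset.Icc 1 (2*K), (h i : ℂ) * (z f)^i) := by
    intro f
    rw [mul_sub, mul_one, Finset.mul_sum]
    congr 1
    apply Finset.sum_congr rfl
    intro i _
    rw [hker f i]
    ring
  have hxsum : x ((n:ℝ)*Ts) - ∑ i ∈ Finset.Icc 1 (2*K), (h i:ℂ) * x (((n:ℝ) - i)*Ts)
      = ∫ f : ℝ, g f * eKer f ((n:ℝ)*Ts)
          * (1 - ∑ i ∈ Finset.Icc 1 (2*K), (h i : ℂ) * (z f)^i) := by
    have h1 : ∀ i : ℕ, (h i : ℂ) * x (((n:ℝ) - i)*Ts)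
        = ∫ f : ℝ, (h i : ℂ) * (g f * eKer f (((n:ℝ) - i)*Ts)) := by
      intro i
      rw [hxJ, integral_const_mul]
    rw [hxJ ((n:ℝ)*Ts), Finset.sum_congr rfl (fun i _ => h1 i),
      ← integral_finset_sum _ (fun i _ => ((hIt _).const_mul _)),
      ← integral_sub (hIt _) (integrable_finset_sum _ (fun i _ => ((hIt _).const_mul _)))]
    exact integral_congr_ae (Filter.Eventually.of_forall fun f => hDid f)
  rw [hxsum]
  have hDint : Integrable (fun f : ℝ => g f * eKer f ((n:ℝ)*Ts)
      * (1 - ∑ i ∈ Finset.Icc 1 (2*K), (h i:ℂ) * (z f)^i)) volume := by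
    apply Integrable.congr ((hIt _).sub (integrable_finset_sum _
      (fun i _ => ((hIt _).const_mul _))))
    exact Filter.Eventually.of_forall fun f => hDid f
  have hptb : ∀ f : ℝ, ‖g f * eKer f ((n:ℝ)*Ts)
      * (1 - ∑ i ∈ Finset.Icc 1 (2*K), (h i:ℂ) * (z f)^i)‖ ≤ ‖g f‖ * B := by
    intro f
    by_cases hf : f ∈ Set.Ioc (-W) W
    · rw [norm_mul, norm_mul, norm_eKer, mul_one]
      apply mul_le_mul_of_nonneg_left _ (norm_nonneg (g f))
      rw [← hcoef (z f) (hzne f), hB]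
      exact cheb_norm_bound W Ts f hW hTs hNyq K hf
    · rw [hsupp f hf]
      simp [hB0]
  refine le_trans (norm_integral_le_integral_norm _)
    (le_trans (integral_mono hDint.norm (hgi.norm.mul_const B) hptb) ?_)
  rw [integral_mul_const]
  rw [show Real.sqrt (2*W*E) * 2 * ((1 - Real.cos (2 * Real.pi * W * Ts)) / 2) ^ K
    = Real.sqrt (2*W*E) * B from by rw [hB, mul_assoc]]
  exact mul_le_mul_of_nonneg_right hI₁ hB0
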